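/- For 0 < ℓ < L, the quantity ξ² defined by the ratio (ρ − θ)/((1+ρ)ν − θ) with ρ = √(L/ℓ) − 1 and θ = ν = (√L − √ℓ)/(√L + √ℓ) equals 1 + 1/(√(L/ℓ) − 1), and in particular ξ² ≥ 1 + √(ℓ/L). -/

import Mathlib

theorem stmt18 (ℓ L : ℝ) (hℓ : 0 < ℓ) (hℓL : ℓ < L)
    (ρ θ ν ξsq : ℝ)
    (hρ : ρ = Real.sqrt (L / ℓ) - 1)
    (hθ : θ = (Real.sqrt L - Real.sqrt ℓ) / (Real.sqrt L + Real.sqrt ℓ))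
    (hν : ν = θ)
    (hξ : ξsq = (ρ - θ) / ((1 + ρ) * ν - θ)) :
    ξsq = 1 + 1 / (Real.sqrt (L / ℓ) - 1) ∧ 1 + Real.sqrt (ℓ / L) ≤ ξsq := by
  set t := Real.sqrt ℓ with ht'
  set s := Real.sqrt L with hs'
  have ht : 0 < t := Real.sqrt_pos.2 hℓ
  have hst : t < s := Real.sqrt_lt_sqrt hℓ.le hℓL
  have hs : 0 < s := ht.trans hst
  have h1 : Real.sqrt (L / ℓ) = s / t := by
    rw [Real.sqrt_div (le_of_lt (hℓ.trans hℓL))]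
  have h2 : Real.sqrt (ℓ / L) = t / s := by
    rw [Real.sqrt_div hℓ.le]
  have hsum : 0 < s + t := by linarith
  have hdiff : 0 < s - t := by linarith
  have hξeq : ξsq = s / (s - t) := by
    rw [hξ, hν, hθ, hρ, h1]
    rw [div_eq_div_iff]
    · field_simp
      ring
    · have : (1 + (s / t - 1)) * ((s - t) / (s + t)) - (s - t) / (s + t)
          = (s - t)^2 / (t * (s + t)) := by
        field_simp
        ring
      rw [this]
      positivity
    · positivity
  constructor
  · rw [hξeq, h1]
    rw [div_eq_iff (by positivity)]
    have h3 : s / t - 1 = (s - t) / t := by field_simp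
    rw [h3]
    field_simp
    ring
  · rw [hξeq, h2]
    have h4 : 1 + t / s = (s + t) / s := by field_simp
    rw [h4, div_le_div_iff₀ hs hdiff]
    nlinarith [sq_nonneg t]
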